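/- For κ < 0, the function c(h) = 2h + κh³/(2 - (1+κ)h) is strictly concave on [1, 2), and its derivative (after clearing the positive factor (2-(1+κ)h)²) is proportional to P(h) = -κ(1+κ)h³ + [3κ + (1+κ)²]h² - 4(1+κ)h + 4. Since P(1) = 1 > 0 and P(2) = 4κ(1-κ) < 0, the equation P(h) = 0 has a unique root in [1, 2). -/

import Mathlib

private lemma aux_hasDerivAt (κ x : ℝ) (hx : 2 - (1+κ)*x ≠ 0) :
    HasDerivAt (fun h : ℝ => 2*h + κ*h^3/(2-(1+κ)*h))
      (2 + (κ*(3*x^2)*(2-(1+κ)*x) - κ*x^3*(-(1+κ)))/(2-(1+κ)*x)^2) x := by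
  have h1 : HasDerivAt (fun h : ℝ => 2*h) 2 x := by
    simpa using (hasDerivAt_id x).const_mul 2
  have hnum : HasDerivAt (fun h : ℝ => κ*h^3) (κ*(3*x^2)) x := by
    simpa using (hasDerivAt_pow 3 x).const_mul κ
  have hden : HasDerivAt (fun h : ℝ => 2 - (1+κ)*h) (-(1+κ)) x := by
    simpa using ((hasDerivAt_id x).const_mul (1+κ)).const_sub 2
  exact h1.add (hnum.div hden hx)

private lemma aux_g_hasDerivAt (κ x : ℝ) (hx : 2 - (1+κ)*x ≠ 0) :
    HasDerivAt (fun h : ℝ => 2 + (6*κ*h^2 - 2*κ*(1+κ)*h^3)/(2-(1+κ)*h)^2)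
      (((12*κ*x - 6*κ*(1+κ)*x^2)*(2-(1+κ)*x)^2 -
        (6*κ*x^2 - 2*κ*(1+κ)*x^3)*(2*(2-(1+κ)*x)*(-(1+κ))))/((2-(1+κ)*x)^2)^2) x := by
  have hnum : HasDerivAt (fun h : ℝ => 6*κ*h^2 - 2*κ*(1+κ)*h^3)
      (12*κ*x - 6*κ*(1+κ)*x^2) x := by
    have a := (hasDerivAt_pow 2 x).const_mul (6*κ)
    have b := (hasDerivAt_pow 3 x).const_mul (2*κ*(1+κ))
    exact (a.sub b).congr_deriv (by push_cast; ring)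
  have hden0 : HasDerivAt (fun h : ℝ => 2 - (1+κ)*h) (-(1+κ)) x := by
    simpa using ((hasDerivAt_id x).const_mul (1+κ)).const_sub 2
  have hden : HasDerivAt (fun h : ℝ => (2-(1+κ)*h)^2)
      (2*(2-(1+κ)*x)*(-(1+κ))) x := by
    have := hden0.pow 2
    exact this.congr_deriv (by push_cast; ring)
  have hdenne : (2-(1+κ)*x)^2 ≠ 0 := pow_ne_zero 2 hx
  exact ((hasDerivAt_const x (2:ℝ)).add (hnum.div hden hdenne)).congr_deriv (by ring)

private lemma aux_P_hasDerivAt (κ x : ℝ) :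
    HasDerivAt (fun h : ℝ => -κ*(1+κ)*h^3 + (3*κ+(1+κ)^2)*h^2 - 4*(1+κ)*h + 4)
      (-κ*(1+κ)*(3*x^2) + (3*κ+(1+κ)^2)*(2*x) - 4*(1+κ)) x := by
  have a := (hasDerivAt_pow 3 x).const_mul (-κ*(1+κ))
  have b := (hasDerivAt_pow 2 x).const_mul (3*κ+(1+κ)^2)
  have c := (hasDerivAt_id x).const_mul (4*(1+κ))
  have := ((a.add b).sub c).add_const 4
  exact this.congr_deriv (by push_cast; ring)

theorem stmt_14 (κ : ℝ) (hκ : κ < 0) :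
    StrictConcaveOn ℝ (Set.Ico (1:ℝ) 2)
      (fun h => 2 * h + κ * h ^ 3 / (2 - (1 + κ) * h)) ∧
    (∀ h ∈ Set.Ico (1:ℝ) 2,
      deriv (fun h => 2 * h + κ * h ^ 3 / (2 - (1 + κ) * h)) h *
          (2 - (1 + κ) * h) ^ 2 =
        2 * (-κ * (1 + κ) * h ^ 3 + (3 * κ + (1 + κ) ^ 2) * h ^ 2 -
          4 * (1 + κ) * h + 4)) ∧
    (-κ * (1 + κ) * 1 ^ 3 + (3 * κ + (1 + κ) ^ 2) * 1 ^ 2 - 4 * (1 + κ) * 1 + 4 = 1) ∧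
    (-κ * (1 + κ) * 2 ^ 3 + (3 * κ + (1 + κ) ^ 2) * 2 ^ 2 - 4 * (1 + κ) * 2 + 4 =
      4 * κ * (1 - κ)) ∧
    (4 * κ * (1 - κ) < 0) ∧
    (∃! h : ℝ, h ∈ Set.Ico (1:ℝ) 2 ∧
      -κ * (1 + κ) * h ^ 3 + (3 * κ + (1 + κ) ^ 2) * h ^ 2 -
        4 * (1 + κ) * h + 4 = 0) := by
  have hD : ∀ x : ℝ, 1 ≤ x → x < 2 → 0 < 2 - (1+κ)*x := by
    intro x h1 h2
    nlinarith [mul_pos (neg_pos.mpr hκ) (show (0:ℝ) < x by linarith)]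
  -- f and its simplified derivative g
  set f : ℝ → ℝ := fun h => 2 * h + κ * h ^ 3 / (2 - (1 + κ) * h) with hf
  set g : ℝ → ℝ := fun h => 2 + (6*κ*h^2 - 2*κ*(1+κ)*h^3)/(2-(1+κ)*h)^2 with hg
  have hderiv : ∀ x : ℝ, 2 - (1+κ)*x ≠ 0 → deriv f x = g x := by
    intro x hx
    rw [(aux_hasDerivAt κ x hx).deriv]
    simp only [hg]
    have hnum : κ*(3*x^2)*(2-(1+κ)*x) - κ*x^3*(-(1+κ)) = 6*κ*x^2 - 2*κ*(1+κ)*x^3 := by ring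
    rw [hnum]
  -- the open set where the denominator is nonzero
  have hUopen : IsOpen {x : ℝ | 2 - (1+κ)*x ≠ 0} := by
    have : Continuous fun x : ℝ => 2 - (1+κ)*x := by continuity
    exact isOpen_ne.preimage this
  -- continuity of f on Ico 1 2
  have hcont : ContinuousOn f (Set.Ico (1:ℝ) 2) := by
    apply ContinuousOn.add (by fun_prop)
    apply ContinuousOn.div (by fun_prop) (by fun_prop)
    intro x hx
    exact (hD x hx.1 hx.2).ne'
  -- strict concavity
  have hconc : StrictConcaveOn ℝ (Set.Ico (1:ℝ) 2) f := by
    apply strictConcaveOn_of_deriv2_neg (convex_Ico 1 2) hcont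
    intro x hx
    rw [interior_Ico] at hx
    have hxD : 0 < 2 - (1+κ)*x := hD x hx.1.le hx.2
    have hmem : x ∈ {x : ℝ | 2 - (1+κ)*x ≠ 0} := hxD.ne'
    have heq : deriv f =ᶠ[nhds x] g :=
      Filter.eventuallyEq_of_mem (hUopen.mem_nhds hmem) (fun y hy => hderiv y hy)
    have : deriv (deriv f) x = deriv g x := Filter.EventuallyEq.deriv_eq heq
    show deriv^[2] f x < 0
    rw [Function.iterate_succ, Function.iterate_one, Function.comp_apply, this,
      (aux_g_hasDerivAt κ x hxD.ne').deriv]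
    have hnum_eq : (12*κ*x - 6*κ*(1+κ)*x^2)*(2-(1+κ)*x)^2 -
        (6*κ*x^2 - 2*κ*(1+κ)*x^3)*(2*(2-(1+κ)*x)*(-(1+κ))) =
        2*κ*x*((1+κ)^2*x^2 - 6*(1+κ)*x + 12)*(2-(1+κ)*x) := by ring
    rw [hnum_eq]
    apply div_neg_of_neg_of_pos
    · have hq : 0 < (1+κ)^2*x^2 - 6*(1+κ)*x + 12 := by nlinarith [sq_nonneg ((1+κ)*x-3)]
      have hx0 : (0:ℝ) < x := by linarith [hx.1]
      nlinarith [mul_pos (mul_pos hx0 hq) hxD, neg_pos.mpr hκ]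
    · positivity
  refine ⟨hconc, ?_, by ring, by ring, by nlinarith, ?_⟩
  · intro h hh
    have hxD : 0 < 2 - (1+κ)*h := hD h hh.1 hh.2
    rw [hderiv h hxD.ne']
    show (2 + (6*κ*h^2 - 2*κ*(1+κ)*h^3)/(2-(1+κ)*h)^2) * (2-(1+κ)*h)^2 = _
    rw [add_mul, div_mul_cancel₀ _ (pow_ne_zero 2 hxD.ne')]
    ring
  · -- unique root of P
    set P : ℝ → ℝ := fun h => -κ*(1+κ)*h^3 + (3*κ+(1+κ)^2)*h^2 - 4*(1+κ)*h + 4 with hP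
    have hPcont : ContinuousOn P (Set.Icc (1:ℝ) 2) := by fun_prop
    have hP1 : P 1 = 1 := by simp only [hP]; ring
    have hP2 : P 2 = 4*κ*(1-κ) := by simp only [hP]; ring
    have hP2neg : P 2 < 0 := by rw [hP2]; nlinarith
    have hanti : StrictAntiOn P (Set.Icc (1:ℝ) 2) := by
      apply strictAntiOn_of_deriv_neg (convex_Icc 1 2) hPcont
      intro x hx
      rw [interior_Icc] at hx
      rw [(aux_P_hasDerivAt κ x).deriv]
      obtain ⟨h1, h2⟩ := hx
      nlinarith [mul_nonneg (sub_nonneg.mpr h1.le) (sub_nonneg.mpr h2.le), sq_nonneg (2*x-3),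
        mul_nonneg (mul_nonneg (sub_nonneg.mpr h1.le) (by linarith : (0:ℝ) ≤ 2 - x))
          (le_of_lt (neg_pos.mpr hκ)),
        sq_nonneg κ, sq_nonneg (κ*(x-1)), sq_nonneg (κ*(2-x)),
        mul_pos (neg_pos.mpr hκ) (neg_pos.mpr hκ)]
    have hiv : (0:ℝ) ∈ Set.Ioo (P 2) (P 1) := ⟨hP2neg, by rw [hP1]; norm_num⟩
    obtain ⟨c, hc, hPc⟩ := intermediate_value_Ioo' (by norm_num : (1:ℝ) ≤ 2) hPcont hiv
    refine ⟨c, ⟨⟨hc.1.le, hc.2⟩, hPc⟩, ?_⟩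
    intro y hy
    have hy2 : P y = 0 := hy.2
    exact hanti.injOn ⟨hy.1.1, hy.1.2.le⟩ ⟨hc.1.le, hc.2.le⟩ (hy2.trans hPc.symm)
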